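/- For all y ∈ {1, ..., n+1}^d, the cost C(y) := min_{a ∈ ℝ} ∑_{i=1}^d |y_i - a| equals ∑_{j=1}^{n} wt(#{i : y_i > j}), where wt(k) = min(k, d-k). -/

import Mathlib

open Finset

lemma id1 (x : ℝ) : 1 - min (max x 0) 1 = max (1 - x) 0 - max (-x) 0 := by
  rcases le_total x 0 with h | h <;> rcases le_total 1 x with h1 | h1 <;>
    simp [max_eq_left, max_eq_right, min_eq_left, min_eq_right, *] <;> linarith

lemma id2 (x : ℝ) : min (max x 0) 1 = max x 0 - max (x - 1) 0 := by
  rcases le_total x 0 with h | h <;> rcases le_total 1 x with h1 | h1 <;>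
    simp [max_eq_left, max_eq_right, min_eq_left, min_eq_right, *] <;> linarith

lemma key (n y : ℕ) (hy1 : 1 ≤ y) (hy2 : y ≤ n + 1) (a : ℝ) :
    ∑ j ∈ Icc 1 n, |(if j < y then (1:ℝ) else 0) - min (max (a - j) 0) 1|
      = (max ((y:ℝ) - a) 0 - max (1 - a) 0) + (max (a - y) 0 - max (a - (n+1)) 0) := by
  have ht0 : ∀ j : ℕ, 0 ≤ min (max (a - j) 0) 1 := fun j => le_min (le_max_right _ _) one_pos.le
  have ht1 : ∀ j : ℕ, min (max (a - j) 0) 1 ≤ 1 := fun j => min_le_right _ _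
  have hIcc : Icc 1 n = Ico 1 (n+1) := by rw [Finset.Ico_add_one_right_eq_Icc]
  rw [hIcc, Finset.sum_Ico_eq_sum_range]
  simp only [show n + 1 - 1 = n from rfl]
  rw [Finset.range_eq_Ico, ← Finset.sum_Ico_consecutive _ (Nat.zero_le (y-1)) (by omega : y - 1 ≤ n)]
  have h1 : ∑ i ∈ Ico 0 (y-1), |(if 1 + i < y then (1:ℝ) else 0) - min (max (a - (1+i:ℕ)) 0) 1|
      = max ((y:ℝ) - a) 0 - max (1 - a) 0 := by
    have hcong : ∀ i ∈ Ico 0 (y-1), |(if 1 + i < y then (1:ℝ) else 0) - min (max (a - (1+i:ℕ)) 0) 1|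
        = max (((i+1:ℕ):ℝ) + 1 - a) 0 - max (((i+1:ℕ):ℝ) - a) 0 := by
      intro i hi
      simp only [Finset.mem_Ico] at hi
      rw [if_pos (by omega), abs_of_nonneg (by linarith [ht1 (1+i)])]
      have := id1 (a - ((1+i:ℕ):ℝ)); push_cast at this ⊢; rw [this]; ring_nf
    rw [Finset.sum_congr rfl hcong, ← Finset.range_eq_Ico]
    have := Finset.sum_range_sub (fun k => max (((k:ℝ)) + 1 - a) 0) (y - 1)
    push_cast at this ⊢
    rw [this]
    congr 2
    · congr 1; push_cast [Nat.cast_sub hy1]; ring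
    · norm_num
  have h2 : ∑ i ∈ Ico (y-1) n, |(if 1 + i < y then (1:ℝ) else 0) - min (max (a - (1+i:ℕ)) 0) 1|
      = max (a - y) 0 - max (a - (n+1)) 0 := by
    have hcong : ∀ i ∈ Ico (y-1) n, |(if 1 + i < y then (1:ℝ) else 0) - min (max (a - (1+i:ℕ)) 0) 1|
        = max (a - ((i+1:ℕ):ℝ)) 0 - max (a - (((i+1)+1:ℕ):ℝ)) 0 := by
      intro i hi
      simp only [Finset.mem_Ico] at hi
      rw [if_neg (by omega), zero_sub, abs_neg, abs_of_nonneg (ht0 (1+i))]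
      have := id2 (a - ((1+i:ℕ):ℝ)); push_cast at this ⊢; rw [this]; ring_nf
    rw [Finset.sum_congr rfl hcong, Finset.sum_Ico_eq_sum_range]
    have redo : ∀ i ∈ range (n - (y-1)),
        ((a - ((y-1+i+1:ℕ):ℝ)) ⊔ 0 - (a - ((y-1+i+1+1:ℕ):ℝ)) ⊔ 0)
        = ((fun t => (a - ((y+t:ℕ):ℝ)) ⊔ 0) i - (fun t => (a - ((y+t:ℕ):ℝ)) ⊔ 0) (i+1)) := by
      intro i _
      have e1 : y-1+i+1 = y + i := by omega
      have e2 : y-1+i+1+1 = y + (i+1) := by omega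
      simp only [e1, e2, Nat.add_assoc]
    rw [Finset.sum_congr rfl redo, Finset.sum_range_sub' (fun t => (a - ((y+t:ℕ):ℝ)) ⊔ 0) (n-(y-1))]
    have e4 : y + (n - (y-1)) = n+1 := by omega
    simp only [Nat.add_zero, e4]
    push_cast
    ring_nf
  rw [h1, h2]

lemma sum_abs_ind (d : ℕ) (y : Fin d → ℕ) (j : ℕ) (t : ℝ) (ht0 : 0 ≤ t) (ht1 : t ≤ 1) :
    ∑ i, |(if j < y i then (1:ℝ) else 0) - t|
      = ((Finset.univ.filter fun i => j < y i).card : ℝ) * (1 - t)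
        + ((d - (Finset.univ.filter fun i => j < y i).card : ℕ) : ℝ) * t := by
  classical
  set c := (Finset.univ.filter fun i => j < y i).card with hc
  rw [← Finset.sum_filter_add_sum_filter_not Finset.univ (fun i => j < y i)]
  have h1 : ∀ i ∈ Finset.univ.filter (fun i => j < y i),
      |(if j < y i then (1:ℝ) else 0) - t| = 1 - t := by
    intro i hi; simp only [Finset.mem_filter] at hi
    rw [if_pos hi.2, abs_of_nonneg (by linarith)]
  have h2 : ∀ i ∈ Finset.univ.filter (fun i => ¬ j < y i),
      |(if j < y i then (1:ℝ) else 0) - t| = t := by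
    intro i hi; simp only [Finset.mem_filter] at hi
    rw [if_neg hi.2, zero_sub, abs_neg, abs_of_nonneg ht0]
  rw [Finset.sum_congr rfl h1, Finset.sum_congr rfl h2, Finset.sum_const, Finset.sum_const]
  have hcard : (Finset.univ.filter (fun i => ¬ j < y i)).card = d - c := by
    have := Finset.card_filter_add_card_filter_not (s := (Finset.univ : Finset (Fin d)))
      (p := fun i => j < y i)
    simp only [Finset.card_univ, Fintype.card_fin] at this
    omega
  rw [hcard]; push_cast; ring

lemma card_le_d (d : ℕ) (y : Fin d → ℕ) (j : ℕ) :
    (Finset.univ.filter fun i => j < y i).card ≤ d := by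
  calc (Finset.univ.filter fun i => j < y i).card
      ≤ (Finset.univ : Finset (Fin d)).card := Finset.card_filter_le _ _
    _ = d := by simp

lemma clamp_mem (a : ℝ) (j : ℕ) : 0 ≤ min (max (a - j) 0) 1 ∧ min (max (a - j) 0) 1 ≤ 1 :=
  ⟨le_min (le_max_right _ _) one_pos.le, min_le_right _ _⟩

theorem stmt5 (n d : ℕ) (hn : 1 ≤ n) (hd : 2 ≤ d) (y : Fin d → ℕ)
    (hy : ∀ i, 1 ≤ y i ∧ y i ≤ n + 1) :
    IsLeast (Set.range fun a : ℝ => ∑ i, |(y i : ℝ) - a|)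
      (∑ j ∈ Finset.Icc 1 n,
        (min (Finset.univ.filter fun i => j < y i).card
             (d - (Finset.univ.filter fun i => j < y i).card) : ℝ)) := by
  classical
  set c : ℕ → ℕ := fun j => (Finset.univ.filter fun i => j < y i).card with hcdef
  have hcd : ∀ j, c j ≤ d := fun j => card_le_d d y j
  have hctop : c (n+1) = 0 := by
    rw [hcdef]
    simp only [Finset.card_eq_zero, Finset.filter_eq_empty_iff]
    intro i _
    have := (hy i).2
    omega
  constructor
  · -- membership at the median m
    have hex : ∃ k, 2 * c k ≤ d := ⟨n+1, by omega⟩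
    set m := Nat.find hex with hm
    have hspec : 2 * c m ≤ d := Nat.find_spec hex
    have hm1 : 1 ≤ m := by
      rcases Nat.eq_zero_or_pos m with h0 | h; swap; · exact h
      exfalso
      have hc0 : c 0 = d := by
        rw [hcdef]
        have he : (Finset.univ.filter fun i => 0 < y i) = Finset.univ := by
          apply Finset.filter_true_of_mem
          intro i _; exact lt_of_lt_of_le one_pos (hy i).1
        simp [he]
      rw [h0] at hspec
      omega
    have hm2 : m ≤ n + 1 := Nat.find_le (by omega)
    refine ⟨(m : ℝ), ?_⟩
    have htval : ∀ j : ℕ, min (max ((m:ℝ) - j) 0) 1 = if j < m then 1 else 0 := by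
      intro j
      by_cases hj : j < m
      · rw [if_pos hj]
        have h1 : (1:ℝ) ≤ (m:ℝ) - j := by
          have : (j:ℝ) + 1 ≤ m := by exact_mod_cast hj
          linarith
        rw [max_eq_left (by linarith : (0:ℝ) ≤ (m:ℝ) - j), min_eq_right h1]
      · rw [if_neg hj]
        have h1 : (m:ℝ) - j ≤ 0 := by
          have : (m:ℝ) ≤ j := by exact_mod_cast Nat.le_of_not_lt hj
          linarith
        rw [max_eq_right h1]
        exact min_eq_left one_pos.le
    have hper_i : ∀ i, |(y i : ℝ) - (m:ℝ)|
        = ∑ j ∈ Finset.Icc 1 n, |(if j < y i then (1:ℝ) else 0) - min (max ((m:ℝ) - j) 0) 1| := by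
      intro i
      rw [key n (y i) (hy i).1 (hy i).2 (m:ℝ)]
      have e1 : max (1 - (m:ℝ)) 0 = 0 := by
        apply max_eq_right
        have : (1:ℝ) ≤ (m:ℝ) := by exact_mod_cast hm1
        linarith
      have e2 : max ((m:ℝ) - ((n:ℝ)+1)) 0 = 0 := by
        apply max_eq_right
        have : (m:ℝ) ≤ (n:ℝ) + 1 := by exact_mod_cast hm2
        linarith
      rw [e1, e2]
      rw [show ((y i : ℝ) - m) ⊔ 0 - 0 + (((m:ℝ) - (y i)) ⊔ 0 - 0)
          = ((y i : ℝ) - m) ⊔ 0 + (-((y i : ℝ) - m)) ⊔ 0 by ring_nf]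
      rw [max_zero_add_max_neg_zero_eq_abs_self]
    show ∑ i, |(y i : ℝ) - (m:ℝ)| = _
    rw [Finset.sum_congr rfl fun i _ => hper_i i, Finset.sum_comm]
    apply Finset.sum_congr rfl
    intro j hj
    rw [sum_abs_ind d y j _ (clamp_mem (m:ℝ) j).1 (clamp_mem (m:ℝ) j).2, htval j]
    rw [Nat.cast_sub (hcd j)]
    by_cases hjm : j < m
    · have hgt : d < 2 * c j := by
        have := Nat.find_min hex hjm
        omega
      have hgt' : (d:ℝ) < 2 * c j := by exact_mod_cast hgt
      rw [if_pos hjm, min_eq_right (by linarith : (d:ℝ) - c j ≤ c j)]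
      ring
    · have hle : c j ≤ c m := by
        apply Finset.card_le_card
        intro i hi
        simp only [Finset.mem_filter] at hi ⊢
        exact ⟨hi.1, lt_of_le_of_lt (Nat.le_of_not_lt hjm) hi.2⟩
      have h2 : 2 * c j ≤ d := by omega
      have h2' : 2 * (c j : ℝ) ≤ d := by exact_mod_cast h2
      rw [if_neg hjm, min_eq_left (by linarith : (c j : ℝ) ≤ (d:ℝ) - c j)]
      ring
  · -- lower bound
    rintro x ⟨a, rfl⟩
    show _ ≤ ∑ i, |(y i : ℝ) - a|
    have step1 : ∀ j ∈ Finset.Icc 1 n,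
        (min (c j : ℝ) ((d:ℝ) - c j))
          ≤ ∑ i, |(if j < y i then (1:ℝ) else 0) - min (max (a - j) 0) 1| := by
      intro j _
      have hcdj := hcd j
      rw [sum_abs_ind d y j _ (clamp_mem a j).1 (clamp_mem a j).2, Nat.cast_sub hcdj]
      set t := min (max (a - (j:ℝ)) 0) 1
      have ht0 := (clamp_mem a j).1
      have ht1 := (clamp_mem a j).2
      rcases le_total ((c j : ℝ)) ((d:ℝ) - c j) with h | h
      · rw [min_eq_left h]; nlinarith
      · rw [min_eq_right h]; nlinarith
    calc ∑ j ∈ Finset.Icc 1 n, (min (c j : ℝ) ((d:ℝ) - c j))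
        ≤ ∑ j ∈ Finset.Icc 1 n, ∑ i, |(if j < y i then (1:ℝ) else 0) - min (max (a - j) 0) 1| :=
          Finset.sum_le_sum step1
      _ = ∑ i, ∑ j ∈ Finset.Icc 1 n, |(if j < y i then (1:ℝ) else 0) - min (max (a - j) 0) 1| :=
          Finset.sum_comm
      _ ≤ ∑ i, |(y i : ℝ) - a| := by
          apply Finset.sum_le_sum
          intro i _
          rw [key n (y i) (hy i).1 (hy i).2 a]
          have e1 : (0:ℝ) ≤ max (1 - a) 0 := le_max_right _ _
          have e2 : (0:ℝ) ≤ max (a - ((n:ℝ)+1)) 0 := le_max_right _ _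
          have e3 : ((y i : ℝ) - a) ⊔ 0 + (-((y i : ℝ) - a)) ⊔ 0 = |(y i : ℝ) - a| :=
            max_zero_add_max_neg_zero_eq_abs_self _
          have e4 : (a - (y i : ℝ)) ⊔ 0 = (-((y i : ℝ) - a)) ⊔ 0 := by ring_nf
          rw [e4] at *
          linarith [e3]
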